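/- Let a < b be real numbers, let g : [a,b] \to \mathbb{R} be Borel measurable and of bounded variation on [a,b] with total variation V_a^b(g) and with g_max = \sup_{x \in [a,b]} |g(x)|. Let P and Q be Borel probability measures on \mathbb{R} with P([a,b]) = Q([a,b]) = 1. Then |\int_{[a,b]} g \, dP - \int_{[a,b]} g \, dQ| \le (2 g_max + V_a^b(g)) \cdot d_{KS}(P, Q). -/

import Mathlib

set_option linter.unusedSectionVars false
set_option linter.unusedTactic false
set_option linter.unusedVariables false
set_option maxHeartbeats 1000000

open MeasureTheory Set

noncomputable def ksD (P Q : Measure ℝ) : ℝ :=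
  ⨆ x : ℝ, |(P (Set.Iic x)).toReal - (Q (Set.Iic x)).toReal|

section aux
variable (P Q : Measure ℝ) [IsProbabilityMeasure P] [IsProbabilityMeasure Q]

lemma ksD_nonneg : 0 ≤ ksD P Q :=
  Real.iSup_nonneg fun _ => abs_nonneg _

lemma meas_toReal_le_one (S : Set ℝ) : (P S).toReal ≤ 1 := by
  have := prob_le_one (μ := P) (s := S)
  simpa using ENNReal.toReal_mono ENNReal.one_ne_top this

lemma ksD_Iic (c : ℝ) : |(P (Iic c)).toReal - (Q (Iic c)).toReal| ≤ ksD P Q := by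
  rw [show ksD P Q = ⨆ x : ℝ, |(P (Set.Iic x)).toReal - (Q (Set.Iic x)).toReal| from rfl]
  refine le_ciSup (f := fun x : ℝ => |(P (Iic x)).toReal - (Q (Iic x)).toReal|) ⟨2, ?_⟩ c
  rintro _ ⟨x, rfl⟩
  have h1 := meas_toReal_le_one P (Iic x)
  have h2 := meas_toReal_le_one Q (Iic x)
  have h3 : (0:ℝ) ≤ (P (Iic x)).toReal := ENNReal.toReal_nonneg
  have h4 : (0:ℝ) ≤ (Q (Iic x)).toReal := ENNReal.toReal_nonneg
  rw [abs_le]; constructor <;> linarith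

lemma ksD_Iio (c : ℝ) : |(P (Iio c)).toReal - (Q (Iio c)).toReal| ≤ ksD P Q := by
  set s : ℕ → Set ℝ := fun n => Iic (c - 1/(n+1)) with hs
  have hmono : Monotone s := by
    intro n m hnm
    apply Iic_subset_Iic.2
    have h1 : (0:ℝ) < n + 1 := by positivity
    have : (n:ℝ) + 1 ≤ (m:ℝ) + 1 := by exact_mod_cast by omega
    have := one_div_le_one_div_of_le h1 this
    linarith
  have hU : (⋃ n, s n) = Iio c := by
    ext x
    simp only [hs, mem_iUnion, mem_Iic, mem_Iio]
    constructor
    · rintro ⟨n, hn⟩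
      have : (0:ℝ) < 1/((n:ℝ)+1) := by positivity
      linarith
    · intro hx
      obtain ⟨n, hn⟩ := exists_nat_one_div_lt (sub_pos.2 hx)
      exact ⟨n, by push_cast at hn ⊢; linarith⟩
  have hPt : Filter.Tendsto (fun n => (P (s n)).toReal) Filter.atTop (nhds (P (Iio c)).toReal) := by
    have := tendsto_measure_iUnion_atTop (μ := P) hmono
    rw [hU] at this
    exact (ENNReal.tendsto_toReal (measure_ne_top _ _)).comp this
  have hQt : Filter.Tendsto (fun n => (Q (s n)).toReal) Filter.atTop (nhds (Q (Iio c)).toReal) := by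
    have := tendsto_measure_iUnion_atTop (μ := Q) hmono
    rw [hU] at this
    exact (ENNReal.tendsto_toReal (measure_ne_top _ _)).comp this
  exact le_of_tendsto (hPt.sub hQt).abs
    (Filter.Eventually.of_forall fun n => ksD_Iic P Q _)

lemma compl_toReal {S : Set ℝ} (hS : MeasurableSet S) :
    (P Sᶜ).toReal = 1 - (P S).toReal := by
  have h := measure_add_measure_compl (μ := P) hS
  rw [measure_univ] at h
  have := congrArg ENNReal.toReal h
  rw [ENNReal.toReal_add (measure_ne_top _ _) (measure_ne_top _ _)] at this
  simp at this
  linarith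

lemma ksD_Ioi (c : ℝ) : |(P (Ioi c)).toReal - (Q (Ioi c)).toReal| ≤ ksD P Q := by
  have hP : (P (Ioi c)).toReal = 1 - (P (Iic c)).toReal := by
    rw [← compl_Iic]; exact compl_toReal P measurableSet_Iic
  have hQ : (Q (Ioi c)).toReal = 1 - (Q (Iic c)).toReal := by
    rw [← compl_Iic]; exact compl_toReal Q measurableSet_Iic
  rw [hP, hQ, show (1 - (P (Iic c)).toReal) - (1 - (Q (Iic c)).toReal)
      = -((P (Iic c)).toReal - (Q (Iic c)).toReal) by ring, abs_neg]
  exact ksD_Iic P Q c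

lemma ksD_Ici (c : ℝ) : |(P (Ici c)).toReal - (Q (Ici c)).toReal| ≤ ksD P Q := by
  have hP : (P (Ici c)).toReal = 1 - (P (Iio c)).toReal := by
    rw [← compl_Iio]; exact compl_toReal P measurableSet_Iio
  have hQ : (Q (Ici c)).toReal = 1 - (Q (Iio c)).toReal := by
    rw [← compl_Iio]; exact compl_toReal Q measurableSet_Iio
  rw [hP, hQ, show (1 - (P (Iio c)).toReal) - (1 - (Q (Iio c)).toReal)
      = -((P (Iio c)).toReal - (Q (Iio c)).toReal) by ring, abs_neg]
  exact ksD_Iio P Q c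

lemma ksD_upperSet {S : Set ℝ} (hS : IsUpperSet S) :
    |(P S).toReal - (Q S).toReal| ≤ ksD P Q := by
  rcases eq_empty_or_nonempty S with rfl | hne
  · simpa using ksD_nonneg P Q
  by_cases huniv : S = univ
  · subst huniv; simpa [measure_univ] using ksD_nonneg P Q
  by_cases hbdd : BddBelow S
  · set c := sInf S with hc
    have hIoi : Ioi c ⊆ S := by
      intro x hx
      obtain ⟨y, hy, hyx⟩ := exists_lt_of_csInf_lt hne hx
      exact hS hyx.le hy
    have hIci : S ⊆ Ici c := fun x hx => csInf_le hbdd hx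
    by_cases hcS : c ∈ S
    · have hSeq : S = Ici c := by
        refine subset_antisymm hIci fun x hx => ?_
        rcases eq_or_lt_of_le (mem_Ici.1 hx : c ≤ x) with h | h
        · rwa [← h]
        · exact hIoi h
      rw [hSeq]; exact ksD_Ici P Q c
    · have hSeq : S = Ioi c := by
        refine subset_antisymm (fun x hx => ?_) hIoi
        refine lt_of_le_of_ne (mem_Ici.1 (hIci hx)) fun h => hcS ?_
        rwa [h]
      rw [hSeq]; exact ksD_Ioi P Q c
  · exfalso
    apply huniv
    apply eq_univ_of_forall
    intro x
    obtain ⟨y, hy, hyx⟩ := not_bddBelow_iff.1 hbdd x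
    exact hS hyx.le hy

lemma ksD_upperSet_enn {S : Set ℝ} (hS : IsUpperSet S) :
    P S ≤ Q S + ENNReal.ofReal (ksD P Q) := by
  have h := (abs_le.1 (ksD_upperSet P Q hS)).2
  calc P S = ENNReal.ofReal (P S).toReal := (ENNReal.ofReal_toReal (measure_ne_top _ _)).symm
    _ ≤ ENNReal.ofReal ((Q S).toReal + ksD P Q) := ENNReal.ofReal_le_ofReal (by linarith)
    _ = ENNReal.ofReal (Q S).toReal + ENNReal.ofReal (ksD P Q) :=
        ENNReal.ofReal_add ENNReal.toReal_nonneg (ksD_nonneg P Q)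
    _ = Q S + ENNReal.ofReal (ksD P Q) := by
        rw [ENNReal.ofReal_toReal (measure_ne_top _ _)]

lemma layercake_Ioc {h : ℝ → ℝ} (hmono : Monotone h) (h0 : ∀ x, 0 ≤ h x) {C : ℝ}
    (hC : ∀ x, h x ≤ C) :
    ∫ x, h x ∂P = (∫⁻ t in Ioc 0 C, P {x | t < h x}).toReal := by
  have hC0 : (0:ℝ) ≤ C := le_trans (h0 0) (hC 0)
  rw [integral_eq_lintegral_of_nonneg_ae (Filter.Eventually.of_forall h0)
      hmono.measurable.aestronglyMeasurable,
    lintegral_eq_lintegral_meas_lt P (Filter.Eventually.of_forall h0)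
      hmono.measurable.aemeasurable]
  congr 1
  rw [← Ioc_union_Ioi_eq_Ioi hC0,
    lintegral_union measurableSet_Ioi (Ioc_disjoint_Ioi le_rfl)]
  have hz : ∫⁻ t in Ioi C, P {x | t < h x} = 0 := by
    rw [setLIntegral_congr_fun measurableSet_Ioi
      (fun t ht => ?_), lintegral_zero]
    have : {x | t < h x} = ∅ := by
      ext x; simp only [mem_setOf_eq, mem_empty_iff_false, iff_false, not_lt]
      exact (hC x).trans (le_of_lt (mem_Ioi.1 ht))
    simp [this]
  rw [hz, add_zero]

lemma layercake_finite {h : ℝ → ℝ} {C : ℝ} (hC0 : 0 ≤ C) :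
    ∫⁻ t in Ioc 0 C, P {x | t < h x} ≠ ⊤ := by
  refine ne_top_of_le_ne_top (b := ENNReal.ofReal C) ?_ ?_
  · exact ENNReal.ofReal_ne_top
  · calc ∫⁻ t in Ioc 0 C, P {x | t < h x} ≤ ∫⁻ _ in Ioc 0 C, 1 :=
        lintegral_mono fun t => prob_le_one
      _ = volume (Ioc 0 C) := setLIntegral_one _
      _ = ENNReal.ofReal C := by rw [Real.volume_Ioc, sub_zero]

lemma mono_integral_bound {h : ℝ → ℝ} (hmono : Monotone h) (h0 : ∀ x, 0 ≤ h x) {C : ℝ}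
    (hC : ∀ x, h x ≤ C) :
    |(∫ x, h x ∂P) - ∫ x, h x ∂Q| ≤ C * ksD P Q := by
  have hC0 : (0:ℝ) ≤ C := le_trans (h0 0) (hC 0)
  have hupper : ∀ t : ℝ, IsUpperSet {x | t < h x} :=
    fun t x y hxy hx => lt_of_lt_of_le hx (hmono hxy)
  have key : ∀ (μ ν : Measure ℝ) [IsProbabilityMeasure μ] [IsProbabilityMeasure ν],
      (∫⁻ t in Ioc 0 C, μ {x | t < h x}) ≤
        (∫⁻ t in Ioc 0 C, ν {x | t < h x}) + ENNReal.ofReal (ksD μ ν) * ENNReal.ofReal C := by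
    intro μ ν _ _
    calc ∫⁻ t in Ioc 0 C, μ {x | t < h x}
        ≤ ∫⁻ t in Ioc 0 C, (ν {x | t < h x} + ENNReal.ofReal (ksD μ ν)) :=
          lintegral_mono fun t => ksD_upperSet_enn μ ν (hupper t)
      _ = (∫⁻ t in Ioc 0 C, ν {x | t < h x}) + ENNReal.ofReal (ksD μ ν) * volume (Ioc 0 C) := by
          rw [lintegral_add_right _ measurable_const, setLIntegral_const]
      _ = (∫⁻ t in Ioc 0 C, ν {x | t < h x}) + ENNReal.ofReal (ksD μ ν) * ENNReal.ofReal C := by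
          rw [Real.volume_Ioc, sub_zero]
  have habs : ∀ (μ ν : Measure ℝ) [IsProbabilityMeasure μ] [IsProbabilityMeasure ν],
      (∫ x, h x ∂μ) - ∫ x, h x ∂ν ≤ C * ksD μ ν := by
    intro μ ν _ _
    rw [layercake_Ioc μ hmono h0 hC, layercake_Ioc ν hmono h0 hC]
    have h1 := key μ ν
    have h2 : ((∫⁻ t in Ioc 0 C, ν {x | t < h x}) + ENNReal.ofReal (ksD μ ν) * ENNReal.ofReal C).toReal
        = (∫⁻ t in Ioc 0 C, ν {x | t < h x}).toReal + ksD μ ν * C := by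
      rw [ENNReal.toReal_add (layercake_finite ν hC0)
        (ENNReal.mul_ne_top ENNReal.ofReal_ne_top ENNReal.ofReal_ne_top),
        ENNReal.toReal_mul, ENNReal.toReal_ofReal (ksD_nonneg μ ν), ENNReal.toReal_ofReal hC0]
    have h3 := ENNReal.toReal_mono (ENNReal.add_ne_top.2 ⟨layercake_finite ν hC0,
          ENNReal.mul_ne_top ENNReal.ofReal_ne_top ENNReal.ofReal_ne_top⟩) h1
    rw [h2] at h3
    linarith [mul_comm C (ksD μ ν)]
  have hsymm : ksD Q P = ksD P Q := by
    unfold ksD; congr 1; ext x; rw [abs_sub_comm]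
  have h1 := habs P Q
  have h2 := habs Q P
  rw [hsymm] at h2
  rw [abs_le]; constructor <;> linarith

end aux

/-- Let `g : [a,b] → ℝ` be Borel measurable and of bounded variation with
total variation `V_a^b(g)` and `g_max = sup_{x ∈ [a,b]} |g x|`. For Borel probability
measures `P, Q` concentrated on `[a,b]`,
`|∫_{[a,b]} g dP - ∫_{[a,b]} g dQ| ≤ (2 g_max + V_a^b(g)) · d_KS(P, Q)`. -/
theorem integral_diff_le_of_boundedVariation
    (a b : ℝ) (hab : a < b) (g : ℝ → ℝ) (hgmeas : Measurable g)
    (hgBV : BoundedVariationOn g (Set.Icc a b))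
    (P Q : Measure ℝ) [IsProbabilityMeasure P] [IsProbabilityMeasure Q]
    (hP : P (Set.Icc a b) = 1) (hQ : Q (Set.Icc a b) = 1) :
    |(∫ x in Set.Icc a b, g x ∂P) - ∫ x in Set.Icc a b, g x ∂Q| ≤
      (2 * sSup ((fun x => |g x|) '' Set.Icc a b)
          + (eVariationOn g (Set.Icc a b)).toReal) *
        ⨆ x : ℝ, |(P (Set.Iic x)).toReal - (Q (Set.Iic x)).toReal| := by
  have ha : a ∈ Icc a b := left_mem_Icc.2 hab.le
  have hb : b ∈ Icc a b := right_mem_Icc.2 hab.le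
  have hlbv : LocallyBoundedVariationOn g (Icc a b) := fun x y _ _ =>
    BoundedVariationOn.mono hgBV inter_subset_left
  -- the clamp
  set π : ℝ → ℝ := fun x => max a (min x b) with hπ
  have hπmono : Monotone π := fun x y hxy =>
    max_le_max le_rfl (min_le_min_right _ hxy)
  have hπmem : ∀ x, π x ∈ Icc a b := fun x =>
    ⟨le_max_left _ _, max_le hab.le (min_le_right _ _)⟩
  have hπid : ∀ x ∈ Icc a b, π x = x := fun x hx => by
    simp only [hπ]; rw [min_eq_left hx.2, max_eq_right hx.1]
  -- variation function
  set v : ℝ → ℝ := fun x => variationOnFromTo g (Icc a b) a x with hv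
  have hva : v a = 0 := variationOnFromTo.self g _ a
  -- key variation inequality
  have hkey : ∀ x ∈ Icc a b, ∀ y ∈ Icc a b, x ≤ y → |g y - g x| ≤ v y - v x := by
    intro x hx y hy hxy
    have hadd : v x + variationOnFromTo g (Icc a b) x y = v y :=
      variationOnFromTo.add hlbv ha hx hy
    have hd : |g y - g x| ≤ variationOnFromTo g (Icc a b) x y := by
      rw [← Real.dist_eq, dist_comm, variationOnFromTo.eq_of_le g _ hxy, dist_edist]
      apply ENNReal.toReal_mono (hlbv x y hx hy)
      exact eVariationOn.edist_le g ⟨hx, le_rfl, hxy⟩ ⟨hy, hxy, le_rfl⟩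
    linarith
  -- two monotone pieces
  set h₁ : ℝ → ℝ := fun x => (v (π x) + g (π x) - g a) / 2 with hh₁
  set h₂ : ℝ → ℝ := fun x => (v (π x) - g (π x) + g a) / 2 with hh₂
  have mono₁ : Monotone h₁ := by
    intro x y hxy
    have h := hkey _ (hπmem x) _ (hπmem y) (hπmono hxy)
    have := (abs_le.1 h).1
    simp only [hh₁]; linarith
  have mono₂ : Monotone h₂ := by
    intro x y hxy
    have h := hkey _ (hπmem x) _ (hπmem y) (hπmono hxy)
    have := (abs_le.1 h).2
    simp only [hh₂]; linarith
  have h₁a : h₁ a = 0 := by simp only [hh₁]; rw [hπid a ha, hva]; ring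
  have h₂a : h₂ a = 0 := by simp only [hh₂]; rw [hπid a ha, hva]; ring
  have hfix : ∀ x, h₁ (π x) = h₁ x ∧ h₂ (π x) = h₂ x := fun x => by
    constructor <;> simp only [hh₁, hh₂] <;> rw [hπid _ (hπmem x)]
  have h₁0 : ∀ x, 0 ≤ h₁ x := fun x => by
    have h := mono₁ ((hπmem x).1 : a ≤ π x)
    rw [(hfix x).1, h₁a] at h; exact h
  have h₂0 : ∀ x, 0 ≤ h₂ x := fun x => by
    have h := mono₂ ((hπmem x).1 : a ≤ π x)
    rw [(hfix x).2, h₂a] at h; exact h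
  set C₁ : ℝ := h₁ b with hC₁
  set C₂ : ℝ := h₂ b with hC₂
  have h₁le : ∀ x, h₁ x ≤ C₁ := fun x => by
    have h := mono₁ ((hπmem x).2 : π x ≤ b)
    rw [(hfix x).1] at h; exact h
  have h₂le : ∀ x, h₂ x ≤ C₂ := fun x => by
    have h := mono₂ ((hπmem x).2 : π x ≤ b)
    rw [(hfix x).2] at h; exact h
  have hCsum : C₁ + C₂ = (eVariationOn g (Icc a b)).toReal := by
    have hvb : v b = (eVariationOn g (Icc a b)).toReal := by
      show variationOnFromTo g (Icc a b) a b = (eVariationOn g (Icc a b)).toReal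
      rw [variationOnFromTo.eq_of_le g _ hab.le, Set.inter_self]
    simp only [hC₁, hC₂, hh₁, hh₂]
    rw [hπid b hb]
    rw [← hvb]; ring
  -- measures concentrated on Icc a b
  have hPae : ∀ᵐ x ∂P, x ∈ Icc a b := by
    rw [ae_iff, show {x : ℝ | ¬ x ∈ Icc a b} = (Icc a b)ᶜ from rfl,
      measure_compl measurableSet_Icc (measure_ne_top _ _), hP, measure_univ, tsub_self]
  have hQae : ∀ᵐ x ∂Q, x ∈ Icc a b := by
    rw [ae_iff, show {x : ℝ | ¬ x ∈ Icc a b} = (Icc a b)ᶜ from rfl,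
      measure_compl measurableSet_Icc (measure_ne_top _ _), hQ, measure_univ, tsub_self]
  have hPrestrict : P.restrict (Icc a b) = P := Measure.restrict_eq_self_of_ae_mem hPae
  have hQrestrict : Q.restrict (Icc a b) = Q := Measure.restrict_eq_self_of_ae_mem hQae
  -- integrability
  have hint : ∀ (μ : Measure ℝ) [IsProbabilityMeasure μ],
      Integrable h₁ μ ∧ Integrable h₂ μ := by
    intro μ _
    constructor
    · refine ⟨mono₁.measurable.aestronglyMeasurable, ?_⟩
      apply MeasureTheory.HasFiniteIntegral.of_bounded (C := C₁)
      exact Filter.Eventually.of_forall fun x => by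
        rw [Real.norm_eq_abs, abs_of_nonneg (h₁0 x)]; exact h₁le x
    · refine ⟨mono₂.measurable.aestronglyMeasurable, ?_⟩
      apply MeasureTheory.HasFiniteIntegral.of_bounded (C := C₂)
      exact Filter.Eventually.of_forall fun x => by
        rw [Real.norm_eq_abs, abs_of_nonneg (h₂0 x)]; exact h₂le x
  -- rewrite the integrals
  have hdecomp : ∀ x ∈ Icc a b, g x = h₁ x - h₂ x + g a := by
    intro x hx
    simp only [hh₁, hh₂]
    rw [hπid x hx]; ring
  have hIP : ∫ x in Icc a b, g x ∂P = (∫ x, h₁ x ∂P) - (∫ x, h₂ x ∂P) + g a := by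
    rw [hPrestrict]
    rw [integral_congr_ae (Filter.Eventually.mono hPae hdecomp)]
    have hsubP : Integrable (fun x => h₁ x - h₂ x) P := (hint P).1.sub (hint P).2
    rw [integral_add hsubP (integrable_const _),
      integral_sub (hint P).1 (hint P).2, integral_const]
    simp [measure_univ]
  have hIQ : ∫ x in Icc a b, g x ∂Q = (∫ x, h₁ x ∂Q) - (∫ x, h₂ x ∂Q) + g a := by
    rw [hQrestrict]
    rw [integral_congr_ae (Filter.Eventually.mono hQae hdecomp)]
    have hsubQ : Integrable (fun x => h₁ x - h₂ x) Q := (hint Q).1.sub (hint Q).2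
    rw [integral_add hsubQ (integrable_const _),
      integral_sub (hint Q).1 (hint Q).2, integral_const]
    simp [measure_univ]
  have hb₁ := mono_integral_bound P Q mono₁ h₁0 h₁le
  have hb₂ := mono_integral_bound P Q mono₂ h₂0 h₂le
  -- nonnegativity of sup term
  have hM : 0 ≤ sSup ((fun x => |g x|) '' Icc a b) := by
    apply Real.sSup_nonneg
    rintro y ⟨x, _, rfl⟩; exact abs_nonneg _
  have hD : (0:ℝ) ≤ ksD P Q := ksD_nonneg P Q
  have hgoalD : (⨆ x : ℝ, |(P (Set.Iic x)).toReal - (Q (Set.Iic x)).toReal|) = ksD P Q := rfl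
  rw [hgoalD, hIP, hIQ]
  have habs : |((∫ x, h₁ x ∂P) - (∫ x, h₂ x ∂P) + g a) - ((∫ x, h₁ x ∂Q) - (∫ x, h₂ x ∂Q) + g a)|
      ≤ C₁ * ksD P Q + C₂ * ksD P Q := by
    calc |((∫ x, h₁ x ∂P) - (∫ x, h₂ x ∂P) + g a) - ((∫ x, h₁ x ∂Q) - (∫ x, h₂ x ∂Q) + g a)|
        = |((∫ x, h₁ x ∂P) - (∫ x, h₁ x ∂Q)) - ((∫ x, h₂ x ∂P) - (∫ x, h₂ x ∂Q))| := by
          congr 1; ring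
      _ ≤ |(∫ x, h₁ x ∂P) - (∫ x, h₁ x ∂Q)| + |(∫ x, h₂ x ∂P) - (∫ x, h₂ x ∂Q)| :=
          abs_sub _ _
      _ ≤ C₁ * ksD P Q + C₂ * ksD P Q := add_le_add hb₁ hb₂
  refine habs.trans ?_
  have : C₁ * ksD P Q + C₂ * ksD P Q = (eVariationOn g (Icc a b)).toReal * ksD P Q := by
    rw [← hCsum]; ring
  rw [this]
  apply mul_le_mul_of_nonneg_right _ hD
  linarith
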